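/- arXiv:2011.00718 — 2 statements merged into one kernel-verified Lean document; each statement's English description precedes it below -/
import Mathlib

section
/- Let λ₁, …, λ_m ≥ 0, σ² > 0, and D ≥ 0. Consider minimizing F(N₁,…,N_m) = Σᵢ (1/2)·log₂(1 + λᵢ/(Nᵢ + σ²)) over N₁,…,N_m ≥ 0 subject to Σᵢ Nᵢ ≤ D. Then the allocation Nᵢ = max(η/(2(1 + √(1 + η/λᵢ))) − σ², 0) (with the convention Nᵢ = 0 when λᵢ = 0), where η ≥ 0 is chosen so that Σᵢ Nᵢ = D, is a global minimizer of F on the feasible set. -/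
/-- Tangent-line (KKT) per-coordinate inequality. -/
lemma key_ineq (lam s eta a b : ℝ) (hl : 0 ≤ lam) (hs : 0 < s) (heta : 0 < eta)
    (ha : 0 ≤ a) (hb : 0 ≤ b)
    (h1 : lam * eta ≤ 4 * ((a + s) * (a + s + lam)))
    (h2 : 0 < a → 4 * ((a + s) * (a + s + lam)) = lam * eta) :
    (1 / 2) * Real.logb 2 (1 + lam / (a + s)) ≤
      (1 / 2) * Real.logb 2 (1 + lam / (b + s)) + (2 / (eta * Real.log 2)) * (b - a) := by
  set A := a + s with hA'
  set B := b + s with hB'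
  have hA : 0 < A := by positivity
  have hB : 0 < B := by positivity
  have hAl : 0 < A + lam := by positivity
  have hBl : 0 < B + lam := by positivity
  have hlog2 : 0 < Real.log 2 := Real.log_pos (by norm_num)
  -- core inequality
  have hcore : lam * (B - A) * eta ≤ 4 * ((B - A) * (A * (B + lam))) := by
    rcases le_or_gt A B with hAB | hAB
    · have hstep : lam * eta ≤ 4 * (A * (B + lam)) := by
        nlinarith [mul_le_mul_of_nonneg_left (show A + lam ≤ B + lam by linarith) hA.le]
      nlinarith [mul_le_mul_of_nonneg_left hstep (sub_nonneg.2 hAB)]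
    · have hab : 0 < a := by
        by_contra h
        have ha0 : a = 0 := le_antisymm (not_lt.1 h) ha
        have hAs : A = s := by rw [hA', ha0, zero_add]
        have : A ≤ B := by rw [hAs, hB']; linarith
        linarith
      have heq := h2 hab
      have hlp : 0 < lam := by
        rcases hl.lt_or_eq with h | h
        · exact h
        · exfalso; nlinarith
      have hstep : 4 * (A * (B + lam)) ≤ lam * eta := by
        nlinarith [mul_le_mul_of_nonneg_left (show B + lam ≤ A + lam by linarith) hA.le]
      nlinarith [mul_le_mul_of_nonpos_left hstep (by linarith : B - A ≤ 0)]
  -- log inequality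
  have h1A : 1 + lam / A = (A + lam) / A := by field_simp
  have h1B : 1 + lam / B = (B + lam) / B := by field_simp
  have hX : (0:ℝ) < ((A + lam) / A) / ((B + lam) / B) := by positivity
  have hlogle : Real.log ((A + lam) / A) - Real.log ((B + lam) / B) ≤
      lam * (B - A) / (A * (B + lam)) := by
    have hle := Real.log_le_sub_one_of_pos hX
    rw [Real.log_div (by positivity) (by positivity)] at hle
    have hXv : ((A + lam) / A) / ((B + lam) / B) - 1 = lam * (B - A) / (A * (B + lam)) := by
      field_simp
      ring
    rw [hXv] at hle
    exact hle
  have hfin : lam * (B - A) / (A * (B + lam)) ≤ 4 / eta * (B - A) := by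
    rw [div_le_iff₀ (by positivity)]
    have : 4 / eta * (B - A) * (A * (B + lam)) = 4 * ((B - A) * (A * (B + lam))) / eta := by
      ring
    rw [this, le_div_iff₀ heta]
    exact hcore
  have h3 : Real.log ((A + lam) / A) - Real.log ((B + lam) / B) ≤ 4 / eta * (B - A) :=
    le_trans hlogle hfin
  rw [h1A, h1B, Real.logb, Real.logb]
  have hd : b - a = B - A := by rw [hA', hB']; ring
  rw [hd]
  set L1 := Real.log ((A + lam) / A)
  set L2 := Real.log ((B + lam) / B)
  set c := Real.log 2
  have e2 : (1/(2*c)) * (L1 - L2) = (1/2) * (L1/c) - (1/2) * (L2/c) := by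
    field_simp
  have e1 : (1/(2*c)) * (4/eta * (B - A)) = 2/(eta*c) * (B - A) := by
    field_simp
    ring
  have := mul_le_mul_of_nonneg_left h3 (by positivity : (0:ℝ) ≤ 1/(2*c))
  linarith [e1 ▸ e2 ▸ this]

lemma formula_eq (lam eta : ℝ) (hl : 0 < lam) (heta : 0 < eta) :
    0 < eta / (2 * (1 + Real.sqrt (1 + eta / lam))) ∧
    4 * (eta / (2 * (1 + Real.sqrt (1 + eta / lam))) *
      (eta / (2 * (1 + Real.sqrt (1 + eta / lam))) + lam)) = lam * eta := by
  set r := Real.sqrt (1 + eta / lam) with hr'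
  have hr0 : 0 ≤ r := Real.sqrt_nonneg _
  have hr2 : r ^ 2 = 1 + eta / lam := Real.sq_sqrt (by positivity)
  have hden : 0 < 2 * (1 + r) := by positivity
  have hlr : lam * r ^ 2 = lam + eta := by
    rw [hr2]; field_simp
  refine ⟨by positivity, ?_⟩
  field_simp
  linear_combination (-4) * hlr

open Finset in
theorem thresholded_allocation_optimal (m : ℕ) (lam : Fin m → ℝ) (hlam : ∀ i, 0 ≤ lam i)
    (s D eta : ℝ) (hs : 0 < s) (hD : 0 ≤ D) (heta : 0 ≤ eta)
    (N : Fin m → ℝ)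
    (hN : ∀ i, N i = if lam i = 0 then 0
      else max (eta / (2 * (1 + Real.sqrt (1 + eta / lam i))) - s) 0)
    (hsum : ∑ i, N i = D) :
    ∀ M : Fin m → ℝ, (∀ i, 0 ≤ M i) → ∑ i, M i ≤ D →
      ∑ i, (1 / 2) * Real.logb 2 (1 + lam i / (N i + s)) ≤
        ∑ i, (1 / 2) * Real.logb 2 (1 + lam i / (M i + s)) := by
  intro M hM hMsum
  rcases heta.lt_or_eq with hetapos | hetazero
  · -- eta > 0
    have hNnn : ∀ i, 0 ≤ N i := by
      intro i
      rw [hN i]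
      split
      · exact le_refl 0
      · exact le_max_right _ _
    set mu := 2 / (eta * Real.log 2) with hmu'
    have hlog2 : 0 < Real.log 2 := Real.log_pos (by norm_num)
    have hmupos : 0 ≤ mu := by positivity
    have hkey : ∀ i ∈ univ, (1 / 2) * Real.logb 2 (1 + lam i / (N i + s)) ≤
        (1 / 2) * Real.logb 2 (1 + lam i / (M i + s)) + mu * (M i - N i) := by
      intro i _
      rcases (hlam i).lt_or_eq with hli | hli
      · -- lam i > 0
        have hne : lam i ≠ 0 := ne_of_gt hli
        have hNi : N i = max (eta / (2 * (1 + Real.sqrt (1 + eta / lam i))) - s) 0 := by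
          rw [hN i, if_neg hne]
        obtain ⟨ht0, htEq⟩ := formula_eq (lam i) eta hli hetapos
        set t := eta / (2 * (1 + Real.sqrt (1 + eta / lam i))) with ht'
        rcases le_or_gt t s with hts | hts
        · have hNi0 : N i = 0 := by rw [hNi, max_eq_right (by linarith)]
          apply key_ineq (lam i) s eta (N i) (M i) (hlam i) hs hetapos (hNnn i) (hM i)
          · rw [hNi0]
            nlinarith [ht0, hts, hli]
          · intro hpos
            rw [hNi0] at hpos
            exact absurd hpos (lt_irrefl 0)
        · have hNit : N i = t - s := by rw [hNi, max_eq_left (by linarith)]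
          apply key_ineq (lam i) s eta (N i) (M i) (hlam i) hs hetapos (hNnn i) (hM i)
          · rw [hNit]
            nlinarith [htEq]
          · intro _
            rw [hNit]
            nlinarith [htEq]
      · -- lam i = 0
        apply key_ineq (lam i) s eta (N i) (M i) (hlam i) hs hetapos (hNnn i) (hM i)
        · rw [← hli]
          nlinarith [hNnn i, hs]
        · intro hpos
          exfalso
          have : N i = 0 := by rw [hN i, if_pos hli.symm]
          rw [this] at hpos
          exact lt_irrefl 0 hpos
    calc ∑ i, (1 / 2) * Real.logb 2 (1 + lam i / (N i + s))
        ≤ ∑ i, ((1 / 2) * Real.logb 2 (1 + lam i / (M i + s)) + mu * (M i - N i)) :=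
          Finset.sum_le_sum hkey
      _ = (∑ i, (1 / 2) * Real.logb 2 (1 + lam i / (M i + s))) + mu * ((∑ i, M i) - D) := by
          have hms : ∑ x, mu * (M x - N x) = mu * ((∑ i, M i) - D) := by
            rw [← Finset.mul_sum, Finset.sum_sub_distrib, hsum]
          rw [Finset.sum_add_distrib, hms]
      _ ≤ ∑ i, (1 / 2) * Real.logb 2 (1 + lam i / (M i + s)) := by
          have : mu * ((∑ i, M i) - D) ≤ 0 :=
            mul_nonpos_of_nonneg_of_nonpos hmupos (by linarith)
          linarith
  · -- eta = 0
    have hN0 : ∀ i, N i = 0 := by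
      intro i
      rw [hN i]
      split
      · rfl
      · rw [← hetazero]
        have h0 : (0:ℝ) / (2 * (1 + Real.sqrt (1 + 0 / lam i))) - s = -s := by simp
        rw [h0, max_eq_right (by linarith)]
    have hD0 : D = 0 := by rw [← hsum]; simp [hN0]
    have hsM : ∑ i, M i = 0 :=
      le_antisymm (by rw [← hD0]; exact hMsum) (Finset.sum_nonneg fun i _ => hM i)
    have hM0 : ∀ i, M i = 0 := fun i =>
      (Finset.sum_eq_zero_iff_of_nonneg (fun j _ => hM j)).1 hsM i (mem_univ i)
    apply le_of_eq
    exact Finset.sum_congr rfl fun i _ => by rw [hN0 i, hM0 i]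
end

section
/- Let A be an m×m symmetric positive-definite real matrix with diagonal entries a₁₁, …, a_mm and let Λ = diag(λ₁, …, λ_m) with all λᵢ ≥ 0. Then det(A + Λ)/det(A) ≥ Πᵢ (aᵢᵢ + λᵢ)/aᵢᵢ, with equality if A is diagonal. -/
open Finset Matrix

lemma diagPos {m : ℕ} {M : Matrix (Fin m) (Fin m) ℝ} (hM : M.PosDef) (j : Fin m) :
    0 < M j j := by
  have hne : (Pi.single j 1 : Fin m → ℝ) ≠ 0 := by
    intro h
    have := congrFun h j
    simp at this
  have := hM.dotProduct_mulVec_pos hne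
  simpa [Matrix.mulVec_single, dotProduct, Pi.single_apply] using this

lemma invDiag {m : ℕ} {M : Matrix (Fin m) (Fin m) ℝ} (hM : M.PosDef) (j : Fin m) :
    1 ≤ M j j * M⁻¹ j j := by
  have hBpd : (M⁻¹).PosDef := hM.inv
  set b := M⁻¹ j j with hb
  have hbpos : 0 < b := diagPos hBpd j
  set e : Fin m → ℝ := Pi.single j 1 with he
  set w : Fin m → ℝ := b • e - M⁻¹.mulVec e with hw
  have hMB : M * M⁻¹ = 1 := Matrix.mul_nonsing_inv M hM.det_pos.ne'.isUnit
  have hMsymm : Mᵀ = M := by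
    have := hM.isHermitian
    rwa [Matrix.IsHermitian, Matrix.conjTranspose_eq_transpose_of_trivial] at this
  have hMw : M.mulVec w = b • M.mulVec e - e := by
    rw [hw, Matrix.mulVec_sub, Matrix.mulVec_smul, Matrix.mulVec_mulVec, hMB, Matrix.one_mulVec]
  have hquad : 0 ≤ w ⬝ᵥ M.mulVec w := by simpa using hM.posSemidef.dotProduct_mulVec_nonneg w
  have hX : (M⁻¹.mulVec e) ⬝ᵥ M.mulVec e = 1 := by
    rw [Matrix.dotProduct_mulVec, ← Matrix.mulVec_transpose, hMsymm, Matrix.mulVec_mulVec, hMB,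
      Matrix.one_mulVec, he]
    simp [dotProduct, Pi.single_apply]
  have hee : e ⬝ᵥ e = 1 := by simp [he, dotProduct, Pi.single_apply]
  have heMe : e ⬝ᵥ M.mulVec e = M j j := by
    simp [he, Matrix.mulVec_single, dotProduct, Pi.single_apply]
  have hBee : (M⁻¹.mulVec e) ⬝ᵥ e = b := by
    simp [he, hb, Matrix.mulVec_single, dotProduct, Pi.single_apply]
  have hexp : w ⬝ᵥ M.mulVec w = b * b * M j j - b := by
    rw [hMw, hw, sub_dotProduct, smul_dotProduct, dotProduct_sub,
      dotProduct_sub, dotProduct_smul, dotProduct_smul,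
      heMe, hee, hX, hBee]
    simp only [smul_eq_mul]
    ring
  rw [hexp] at hquad
  nlinarith

lemma detStep {m : ℕ} {M : Matrix (Fin m) (Fin m) ℝ} (hM : M.PosDef) (j : Fin m) {c : ℝ}
    (hc : 0 ≤ c) :
    M.det * ((M j j + c) / M j j) ≤ (M + Matrix.diagonal (Pi.single j c)).det := by
  have hdet : 0 < M.det := hM.det_pos
  have ha : 0 < M j j := diagPos hM j
  have heq : M + Matrix.diagonal (Pi.single j c)
      = M.updateRow j (M j + c • (Pi.single j 1 : Fin m → ℝ)) := by
    ext i k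
    rcases eq_or_ne i j with h | h
    · subst h
      rw [Matrix.updateRow_self]
      simp only [Matrix.add_apply, Pi.add_apply, Pi.smul_apply, smul_eq_mul,
        Matrix.diagonal_apply, Pi.single_apply]
      rcases eq_or_ne i k with hk | hk
      · subst hk; simp
      · simp [hk, Ne.symm hk]
    · rw [Matrix.updateRow_ne h]
      simp only [Matrix.add_apply, Matrix.diagonal_apply, Pi.single_apply]
      rcases eq_or_ne i k with hk | hk
      · subst hk; simp [h]
      · simp [hk]
  have hdetexp : (M + Matrix.diagonal (Pi.single j c)).det
      = M.det + c * M.adjugate j j := by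
    rw [heq, Matrix.det_updateRow_add, Matrix.det_updateRow_smul,
      Matrix.updateRow_eq_self, ← Matrix.adjugate_apply]
  have hadj : M.adjugate j j = M.det * M⁻¹ j j := by
    have h2 : M⁻¹ j j = Ring.inverse M.det * M.adjugate j j := by
      rw [Matrix.inv_def]; simp [Matrix.smul_apply]
    rw [h2, Ring.inverse_eq_inv]
    field_simp
  rw [hdetexp, hadj]
  have key : 1 ≤ M j j * M⁻¹ j j := invDiag hM j
  have h1 : (M j j + c) / M j j = 1 + c / M j j := by field_simp
  rw [h1]
  have h3 : c / M j j ≤ c * M⁻¹ j j := by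
    rw [div_le_iff₀ ha]
    nlinarith [diagPos hM.inv j]
  nlinarith

open Finset in
theorem det_diagonal_perturbation_inequality (m : ℕ) (A : Matrix (Fin m) (Fin m) ℝ)
    (hA : A.PosDef) (lam : Fin m → ℝ) (hlam : ∀ i, 0 ≤ lam i) :
    (∏ i, (A i i + lam i) / A i i) ≤ (A + Matrix.diagonal lam).det / A.det ∧
      (A.IsDiag → (A + Matrix.diagonal lam).det / A.det = ∏ i, (A i i + lam i) / A i i) := by
  have hdetA : 0 < A.det := hA.det_pos
  constructor
  · have main : ∀ S : Finset (Fin m),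
        A.det * ∏ i ∈ S, (A i i + lam i) / A i i
          ≤ (A + Matrix.diagonal (fun i => if i ∈ S then lam i else 0)).det := by
      intro S
      induction S using Finset.induction_on with
      | empty => simp
      | @insert j S hj ih =>
        have hpd : (A + Matrix.diagonal (fun i => if i ∈ S then lam i else 0)).PosDef :=
          hA.add_posSemidef (Matrix.posSemidef_diagonal_iff.mpr
            (fun i => by by_cases h : i ∈ S <;> simp [h, hlam i]))
        set M := A + Matrix.diagonal (fun i => if i ∈ S then lam i else 0) with hMdef
        have hsplit : (fun i => if i ∈ insert j S then lam i else 0)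
            = fun i => (if i ∈ S then lam i else 0) + (Pi.single j (lam j) : Fin m → ℝ) i := by
          funext i
          by_cases h : i = j
          · subst h; simp [hj]
          · simp [Pi.single_apply, h, Finset.mem_insert]
        have hMjj : M j j = A j j := by
          simp [hMdef, Matrix.diagonal_apply, hj]
        have h2 : A + Matrix.diagonal (fun i => if i ∈ insert j S then lam i else 0)
            = M + Matrix.diagonal (Pi.single j (lam j)) := by
          rw [hsplit, ← Matrix.diagonal_add, ← add_assoc, hMdef]
        rw [h2, Finset.prod_insert hj]
        calc A.det * ((A j j + lam j) / A j j * ∏ i ∈ S, (A i i + lam i) / A i i)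
            = (A.det * ∏ i ∈ S, (A i i + lam i) / A i i) * ((A j j + lam j) / A j j) := by ring
          _ ≤ M.det * ((A j j + lam j) / A j j) := by
              apply mul_le_mul_of_nonneg_right ih
              have h5 := diagPos hA j
              have h4 := hlam j
              positivity
          _ ≤ (M + Matrix.diagonal (Pi.single j (lam j))).det := by
              rw [← hMjj]; exact detStep hpd j (hlam j)
    have := main Finset.univ
    simp only [Finset.mem_univ, if_true] at this
    rw [le_div_iff₀ hdetA]
    linarith [this]
  · intro hd
    have hAdiag : Matrix.diagonal A.diag = A := hd.diagonal_diag
    have h1 : A + Matrix.diagonal lam = Matrix.diagonal (fun i => A i i + lam i) := by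
      ext i k
      by_cases h : i = k
      · subst h; simp [Matrix.diagonal_apply_eq]
      · simp [Matrix.diagonal_apply_ne _ h, hd h]
    have h2 : A.det = ∏ i, A i i := by
      conv_lhs => rw [← hAdiag]
      rw [Matrix.det_diagonal]
      rfl
    rw [h1, Matrix.det_diagonal, h2, ← Finset.prod_div_distrib]
end
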